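/- Let G = (V,E) be a finite graph, e = xy ∈ E, η ∈ {0,1}^{E\{e}}, and let C_x, C_y be the clusters of x and y in η. For p ∈ (0,1) and 1 ≤ q₁ ≤ q₂ ≤ q, the conditional probability qFK_{G;p,q}^{b₁,b₂;q₁,q₂}(ω(e)=1 | ω = η off e) equals p/(p + (1−p)Q), where Q = 1 if C_x = C_y; Q = q₁ if C_x ≠ C_y and both clusters intersect b₁; Q = q₂ if C_x ≠ C_y, one cluster misses b₁ but meets b₂ and the other meets b₁ ∪ b₂; and Q = q otherwise. In particular this conditional probability is monotone nondecreasing in η. -/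
import Mathlib


open scoped Classical

noncomputable section
set_option linter.unusedSectionVars false
set_option maxHeartbeats 1000000

variable {V : Type*} [Fintype V] [DecidableEq V]

/-- The graph of open edges of a percolation configuration `ω` on the graph `G`. -/
def openGraph (G : SimpleGraph V) (ω : Finset (Sym2 V)) : SimpleGraph V :=
  SimpleGraph.fromEdgeSet ((ω : Set (Sym2 V)) ∩ G.edgeSet)

/-- Number of clusters of `ω` intersecting `b`. -/
def kappaB (G : SimpleGraph V) (ω : Finset (Sym2 V)) (b : Set V) : ℕ :=
  Nat.card {C : (openGraph G ω).ConnectedComponent //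
    ∃ v ∈ b, (openGraph G ω).connectedComponentMk v = C}

/-- Number of clusters of `ω` intersecting `b₂` but not `b₁`. -/
def kappaB2 (G : SimpleGraph V) (ω : Finset (Sym2 V)) (b₁ b₂ : Set V) : ℕ :=
  Nat.card {C : (openGraph G ω).ConnectedComponent //
    (∃ v ∈ b₂, (openGraph G ω).connectedComponentMk v = C) ∧
    ¬∃ v ∈ b₁, (openGraph G ω).connectedComponentMk v = C}

/-- Number of clusters of `ω` intersecting neither `b₁` nor `b₂`. -/
def kappaI (G : SimpleGraph V) (ω : Finset (Sym2 V)) (b₁ b₂ : Set V) : ℕ :=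
  Nat.card {C : (openGraph G ω).ConnectedComponent //
    ¬∃ v ∈ b₁ ∪ b₂, (openGraph G ω).connectedComponentMk v = C}

/-- Unnormalised quasi-FK weight
`p^{|ω|} (1−p)^{|E∖ω|} q^{κ_i(ω)} q₁^{κ_{b₁}(ω)} q₂^{κ_{b₂}(ω)}`. -/
def qFKweight (G : SimpleGraph V) [DecidableRel G.Adj]
    (p q q₁ q₂ : ℝ) (b₁ b₂ : Set V) (ω : Finset (Sym2 V)) : ℝ :=
  p ^ (ω ∩ G.edgeFinset).card * (1 - p) ^ (G.edgeFinset \ ω).card *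
    q ^ kappaI G ω b₁ b₂ * q₁ ^ kappaB G ω b₁ * q₂ ^ kappaB2 G ω b₁ b₂

/-- The effective cluster-weight `Q` governing the conditional probability that
the edge `{x,y}` is open given the configuration `η` off that edge. -/
def Qval (G : SimpleGraph V) (q q₁ q₂ : ℝ) (b₁ b₂ : Set V)
    (η : Finset (Sym2 V)) (x y : V) : ℝ :=
  if (openGraph G η).Reachable x y then 1
  else if (∃ u ∈ b₁, (openGraph G η).Reachable x u) ∧
          (∃ u ∈ b₁, (openGraph G η).Reachable y u) then q₁
  else if ((¬∃ u ∈ b₁, (openGraph G η).Reachable x u) ∧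
            (∃ u ∈ b₂, (openGraph G η).Reachable x u) ∧
            (∃ u ∈ b₁ ∪ b₂, (openGraph G η).Reachable y u)) ∨
          ((¬∃ u ∈ b₁, (openGraph G η).Reachable y u) ∧
            (∃ u ∈ b₂, (openGraph G η).Reachable y u) ∧
            (∃ u ∈ b₁ ∪ b₂, (openGraph G η).Reachable x u)) then q₂
  else q

/-- The conditional probability that the edge `{x,y}` is open given that the
configuration agrees with `η` off this edge, for the quasi-FK measure. -/
def condOpenProb (G : SimpleGraph V) [DecidableRel G.Adj]
    (p q q₁ q₂ : ℝ) (b₁ b₂ : Set V) (η : Finset (Sym2 V)) (x y : V) : ℝ :=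
  qFKweight G p q q₁ q₂ b₁ b₂ (insert s(x, y) η) /
    (qFKweight G p q q₁ q₂ b₁ b₂ (insert s(x, y) η) + qFKweight G p q q₁ q₂ b₁ b₂ η)


open Finset

private lemma exists_or_mem {b : Set V} {P Q : V → Prop} :
    (∃ v ∈ b, (P v ∨ Q v)) ↔ (∃ v ∈ b, P v) ∨ (∃ v ∈ b, Q v) := by aesop

private lemma exists_union {b₁ b₂ : Set V} {Q : V → Prop} :
    (∃ v ∈ b₁ ∪ b₂, Q v) ↔ (∃ v ∈ b₁, Q v) ∨ (∃ v ∈ b₂, Q v) := by aesop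

private lemma reach_sup_edge (H : SimpleGraph V) (x y : V) (hxy : x ≠ y) (u v : V) :
    (H ⊔ SimpleGraph.edge x y).Reachable u v ↔
      H.Reachable u v ∨ (H.Reachable u x ∧ H.Reachable y v) ∨
        (H.Reachable u y ∧ H.Reachable x v) := by
  constructor
  · rintro ⟨w⟩
    induction w with
    | nil => exact Or.inl (SimpleGraph.Reachable.refl _)
    | cons h q ih =>
      rcases h with h | h
      · have hab := h.reachable
        rcases ih with h1 | ⟨h2, h3⟩ | ⟨h2, h3⟩
        · exact Or.inl (hab.trans h1)
        · exact Or.inr (Or.inl ⟨hab.trans h2, h3⟩)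
        · exact Or.inr (Or.inr ⟨hab.trans h2, h3⟩)
      · rw [SimpleGraph.edge_adj] at h
        rcases h.1 with ⟨rfl, rfl⟩ | ⟨rfl, rfl⟩
        · rcases ih with h1 | ⟨h2, h3⟩ | ⟨h2, h3⟩
          · exact Or.inr (Or.inl ⟨SimpleGraph.Reachable.refl _, h1⟩)
          · exact Or.inl (h2.symm.trans h3)
          · exact Or.inl h3
        · rcases ih with h1 | ⟨h2, h3⟩ | ⟨h2, h3⟩
          · exact Or.inr (Or.inr ⟨SimpleGraph.Reachable.refl _, h1⟩)
          · exact Or.inl h3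
          · exact Or.inl (h2.symm.trans h3)
  · have hadj : (H ⊔ SimpleGraph.edge x y).Adj x y := by
      simp [SimpleGraph.edge_adj, hxy]
    rintro (h | ⟨h2, h3⟩ | ⟨h2, h3⟩)
    · exact h.mono le_sup_left
    · exact ((h2.mono le_sup_left).trans hadj.reachable).trans (h3.mono le_sup_left)
    · exact ((h2.mono le_sup_left).trans hadj.symm.reachable).trans (h3.mono le_sup_left)

private lemma openGraph_insert (G : SimpleGraph V) (η : Finset (Sym2 V)) {x y : V}
    (hxy : G.Adj x y) :
    openGraph G (insert s(x, y) η) = openGraph G η ⊔ SimpleGraph.edge x y := by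
  unfold openGraph SimpleGraph.edge
  rw [← SimpleGraph.fromEdgeSet_union]
  congr 1
  have he : s(x, y) ∈ G.edgeSet := hxy
  ext e
  simp only [Finset.coe_insert, Set.mem_inter_iff, Set.mem_insert_iff, Set.mem_union,
    Set.mem_singleton_iff, Finset.mem_coe]
  constructor
  · rintro ⟨(rfl | h), hE⟩
    · exact Or.inr rfl
    · exact Or.inl ⟨h, hE⟩
  · rintro (⟨h, hE⟩ | rfl)
    · exact ⟨Or.inr h, hE⟩
    · exact ⟨Or.inl rfl, he⟩

private lemma card_filter_split {α : Type*} [Fintype α] [DecidableEq α] (P : α → Prop)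
    [DecidablePred P] (a b : α) (hab : a ≠ b) :
    (univ.filter P).card = ((univ.filter P) \ {a, b}).card
      + ((if P a then 1 else 0) + (if P b then 1 else 0)) := by
  have h1 : (univ.filter P ∩ {a, b}).card = (if P a then 1 else 0) + (if P b then 1 else 0) := by
    have : univ.filter P ∩ {a, b} = ({a, b} : Finset α).filter P := by
      ext c; simp [and_comm]
    rw [this, filter_insert, filter_singleton]
    by_cases ha : P a <;> by_cases hb : P b <;>
      simp [ha, hb, hab, Finset.card_insert_of_notMem]
  have h2 := Finset.card_inter_add_card_sdiff (univ.filter P) ({a, b} : Finset α)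
  omega

private lemma card_filter_split₁ {α : Type*} [Fintype α] [DecidableEq α] (P : α → Prop)
    [DecidablePred P] (a : α) :
    (univ.filter P).card = ((univ.filter P) \ {a}).card + (if P a then 1 else 0) := by
  have h1 : (univ.filter P ∩ {a}).card = (if P a then 1 else 0) := by
    have : univ.filter P ∩ {a} = ({a} : Finset α).filter P := by
      ext c; simp [and_comm]
    rw [this, filter_singleton]
    by_cases ha : P a <;> simp [ha]
  have h2 := Finset.card_inter_add_card_sdiff (univ.filter P) ({a} : Finset α)
  omega


private lemma count_lemma {H H' : SimpleGraph V} {x y : V}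
    (hre : ∀ u v, H'.Reachable u v ↔ H.Reachable u v ∨
        (H.Reachable u x ∧ H.Reachable y v) ∨ (H.Reachable u y ∧ H.Reachable x v))
    (P : H.ConnectedComponent → Prop) (P' : H'.ConnectedComponent → Prop)
    [DecidablePred P] [DecidablePred P']
    (hP : ∀ u, ¬H.Reachable u x → ¬H.Reachable u y →
      (P' (H'.connectedComponentMk u) ↔ P (H.connectedComponentMk u))) :
    Nat.card {C : H'.ConnectedComponent // P' C} =
      ((univ.filter P) \ {H.connectedComponentMk x, H.connectedComponentMk y}).card
        + (if P' (H'.connectedComponentMk x) then 1 else 0) := by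
  classical
  have hmono : ∀ {a b : V}, H.Reachable a b → H'.Reachable a b :=
    fun h => (hre _ _).mpr (Or.inl h)
  set Cx := H.connectedComponentMk x with hCx
  set Cy := H.connectedComponentMk y with hCy
  let φ : H.ConnectedComponent → H'.ConnectedComponent :=
    SimpleGraph.ConnectedComponent.lift (fun v => H'.connectedComponentMk v)
      (fun u v p _ => SimpleGraph.ConnectedComponent.eq.mpr (hmono p.reachable))
  have hφ : ∀ u, φ (H.connectedComponentMk u) = H'.connectedComponentMk u := fun _ => rfl
  have hxy' : H'.connectedComponentMk x = H'.connectedComponentMk y :=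
    SimpleGraph.ConnectedComponent.eq.mpr
      ((hre x y).mpr (Or.inr (Or.inl ⟨SimpleGraph.Reachable.refl _, SimpleGraph.Reachable.refl _⟩)))
  have hcoll : ∀ C D : H.ConnectedComponent, φ C = φ D →
      C = D ∨ (C = Cx ∧ D = Cy) ∨ (C = Cy ∧ D = Cx) := by
    refine SimpleGraph.ConnectedComponent.ind₂ ?_
    intro u v h
    rw [hφ, hφ, SimpleGraph.ConnectedComponent.eq, hre] at h
    rcases h with h | ⟨h2, h3⟩ | ⟨h2, h3⟩
    · exact Or.inl (SimpleGraph.ConnectedComponent.eq.mpr h)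
    · exact Or.inr (Or.inl ⟨SimpleGraph.ConnectedComponent.eq.mpr h2,
        SimpleGraph.ConnectedComponent.eq.mpr h3.symm⟩)
    · exact Or.inr (Or.inr ⟨SimpleGraph.ConnectedComponent.eq.mpr h2,
        SimpleGraph.ConnectedComponent.eq.mpr h3.symm⟩)
  rw [Nat.card_eq_fintype_card, Fintype.card_subtype]
  set D : Finset H.ConnectedComponent :=
    ((univ.filter P) \ {Cx, Cy}) ∪ (if P' (H'.connectedComponentMk x) then {Cx} else ∅) with hD
  have hCxD : ∀ C ∈ D, C ≠ Cy ∨ Cx = Cy := by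
    intro C hC
    rcases Finset.mem_union.mp hC with h | h
    · exact Or.inl fun hC' => (Finset.mem_sdiff.mp h).2 (by simp [hC'])
    · split_ifs at h with hc
      · simp only [Finset.mem_singleton] at h
        by_cases hcc : C = Cy
        · exact Or.inr (h.symm.trans hcc)
        · exact Or.inl hcc
      · simp at h
  have hquot : ∀ u : V, Quot.mk H.Reachable u = H.connectedComponentMk u := fun _ => rfl
  have key : D.card = (univ.filter P').card := by
    refine Finset.card_bij (fun C _ => φ C) ?_ ?_ ?_
    · intro C hC
      show φ C ∈ filter P' univ
      rcases Finset.mem_union.mp hC with h | h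
      · obtain ⟨u, hu⟩ := C.exists_rep
        rw [hquot] at hu
        subst hu
        have hmem := Finset.mem_sdiff.mp h
        have hux : ¬H.Reachable u x := fun hr => hmem.2 (by
          have h' : H.connectedComponentMk u = Cx := SimpleGraph.ConnectedComponent.eq.mpr hr
          simp [h'])
        have huy : ¬H.Reachable u y := fun hr => hmem.2 (by
          have h' : H.connectedComponentMk u = Cy := SimpleGraph.ConnectedComponent.eq.mpr hr
          simp [h'])
        have hPu : P (H.connectedComponentMk u) := (Finset.mem_filter.mp hmem.1).2
        rw [hφ u]
        simp only [Finset.mem_filter, Finset.mem_univ, true_and]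
        exact (hP u hux huy).mpr hPu
      · split_ifs at h with hc
        · simp only [Finset.mem_singleton] at h
          subst h
          show φ Cx ∈ filter P' univ
          have hx : φ Cx = H'.connectedComponentMk x := rfl
          rw [hx]
          simp only [Finset.mem_filter, Finset.mem_univ, true_and]
          exact hc
        · simp at h
    · intro C hC D' hD' h
      rcases hcoll C D' h with h | ⟨h1, h2⟩ | ⟨h1, h2⟩
      · exact h
      · rcases hCxD D' hD' with h' | h'
        · exact absurd h2 h'
        · rw [h1, h2, ← h']
      · rcases hCxD C hC with h' | h'
        · exact absurd h1 h'
        · rw [h1, h2, ← h']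
    · intro C' hC'
      obtain ⟨u, hu⟩ := C'.exists_rep
      have hu' : H'.connectedComponentMk u = C' := hu
      subst hu'
      have hPu : P' (H'.connectedComponentMk u) := (Finset.mem_filter.mp hC').2
      by_cases hux : H.Reachable u x
      · have heq : H'.connectedComponentMk u = H'.connectedComponentMk x :=
          SimpleGraph.ConnectedComponent.eq.mpr (hmono hux)
        refine ⟨Cx, ?_, ?_⟩
        · apply Finset.mem_union_right
          rw [if_pos (heq ▸ hPu)]
          exact Finset.mem_singleton_self _
        · show φ Cx = H'.connectedComponentMk u
          rw [hφ x]
          exact heq.symm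
      · by_cases huy : H.Reachable u y
        · have heq : H'.connectedComponentMk u = H'.connectedComponentMk x := by
            rw [hxy']
            exact SimpleGraph.ConnectedComponent.eq.mpr (hmono huy)
          refine ⟨Cx, ?_, ?_⟩
          · apply Finset.mem_union_right
            rw [if_pos (heq ▸ hPu)]
            exact Finset.mem_singleton_self _
          · show φ Cx = H'.connectedComponentMk u
            rw [hφ x]
            exact heq.symm
        · refine ⟨H.connectedComponentMk u, ?_, hφ u⟩
          apply Finset.mem_union_left
          rw [Finset.mem_sdiff]
          constructor
          · simp only [Finset.mem_filter, Finset.mem_univ, true_and]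
            exact (hP u hux huy).mp hPu
          · intro hmem
            simp only [Finset.mem_insert, Finset.mem_singleton, hCx, hCy] at hmem
            rcases hmem with h | h
            · exact hux (SimpleGraph.ConnectedComponent.eq.mp h)
            · exact huy (SimpleGraph.ConnectedComponent.eq.mp h)
  rw [← key, hD]
  rw [Finset.card_union_of_disjoint]
  · congr 1
    split_ifs <;> simp
  · split_ifs with hc
    · simp only [Finset.disjoint_singleton_right, Finset.mem_sdiff]
      intro h
      exact h.2 (by simp)
    · simp

private lemma cluster_identity' {H H' : SimpleGraph V} {x y : V}
    (hre : ∀ u v, H'.Reachable u v ↔ H.Reachable u v ∨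
        (H.Reachable u x ∧ H.Reachable y v) ∨ (H.Reachable u y ∧ H.Reachable x v))
    (q q₁ q₂ : ℝ) (b₁ b₂ : Set V) :
    q ^ Nat.card {C : H'.ConnectedComponent // ¬∃ v ∈ b₁ ∪ b₂, H'.connectedComponentMk v = C} *
      q₁ ^ Nat.card {C : H'.ConnectedComponent // ∃ v ∈ b₁, H'.connectedComponentMk v = C} *
      q₂ ^ Nat.card {C : H'.ConnectedComponent // (∃ v ∈ b₂, H'.connectedComponentMk v = C) ∧
          ¬∃ v ∈ b₁, H'.connectedComponentMk v = C} *
      (if H.Reachable x y then 1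
       else if (∃ u ∈ b₁, H.Reachable x u) ∧ (∃ u ∈ b₁, H.Reachable y u) then q₁
       else if ((¬∃ u ∈ b₁, H.Reachable x u) ∧ (∃ u ∈ b₂, H.Reachable x u) ∧
            (∃ u ∈ b₁ ∪ b₂, H.Reachable y u)) ∨ ((¬∃ u ∈ b₁, H.Reachable y u) ∧
            (∃ u ∈ b₂, H.Reachable y u) ∧ (∃ u ∈ b₁ ∪ b₂, H.Reachable x u)) then q₂ else q) =
    q ^ Nat.card {C : H.ConnectedComponent // ¬∃ v ∈ b₁ ∪ b₂, H.connectedComponentMk v = C} *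
      q₁ ^ Nat.card {C : H.ConnectedComponent // ∃ v ∈ b₁, H.connectedComponentMk v = C} *
      q₂ ^ Nat.card {C : H.ConnectedComponent // (∃ v ∈ b₂, H.connectedComponentMk v = C) ∧
          ¬∃ v ∈ b₁, H.connectedComponentMk v = C} := by
  classical
  have hmk : ∀ u, ¬H.Reachable u x → ¬H.Reachable u y → ∀ v,
      (H'.connectedComponentMk v = H'.connectedComponentMk u ↔
        H.connectedComponentMk v = H.connectedComponentMk u) := by
    intro u hux huy v
    rw [SimpleGraph.ConnectedComponent.eq, SimpleGraph.ConnectedComponent.eq, hre]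
    constructor
    · rintro (h | ⟨h2, h3⟩ | ⟨h2, h3⟩)
      · exact h
      · exact absurd h3.symm huy
      · exact absurd h3.symm hux
    · exact Or.inl
  have hmkx : ∀ v, (H'.connectedComponentMk v = H'.connectedComponentMk x ↔
      (H.connectedComponentMk v = H.connectedComponentMk x ∨
        H.connectedComponentMk v = H.connectedComponentMk y)) := by
    intro v
    rw [SimpleGraph.ConnectedComponent.eq, SimpleGraph.ConnectedComponent.eq,
      SimpleGraph.ConnectedComponent.eq, hre]
    constructor
    · rintro (h | ⟨h2, h3⟩ | ⟨h2, h3⟩)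
      · exact Or.inl h
      · exact Or.inl h2
      · exact Or.inr h2
    · rintro (h | h)
      · exact Or.inl h
      · exact Or.inr (Or.inr ⟨h, SimpleGraph.Reachable.refl _⟩)
  have hconv : ∀ (b : Set V) (z : V), (∃ u ∈ b, H.Reachable z u) ↔
      (∃ v ∈ b, H.connectedComponentMk v = H.connectedComponentMk z) := by
    intro b z
    constructor
    · rintro ⟨u, hu, h⟩; exact ⟨u, hu, SimpleGraph.ConnectedComponent.eq.mpr h.symm⟩
    · rintro ⟨u, hu, h⟩; exact ⟨u, hu, (SimpleGraph.ConnectedComponent.eq.mp h).symm⟩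
  -- conditions at the merged component
  have c1 : (∃ v ∈ b₁, H'.connectedComponentMk v = H'.connectedComponentMk x) ↔
      ((∃ v ∈ b₁, H.connectedComponentMk v = H.connectedComponentMk x) ∨
       (∃ v ∈ b₁, H.connectedComponentMk v = H.connectedComponentMk y)) :=
    (exists_congr fun v => and_congr_right fun _ => hmkx v).trans exists_or_mem
  have c2 : (∃ v ∈ b₂, H'.connectedComponentMk v = H'.connectedComponentMk x) ↔
      ((∃ v ∈ b₂, H.connectedComponentMk v = H.connectedComponentMk x) ∨
       (∃ v ∈ b₂, H.connectedComponentMk v = H.connectedComponentMk y)) :=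
    (exists_congr fun v => and_congr_right fun _ => hmkx v).trans exists_or_mem
  have c12 : (∃ v ∈ b₁ ∪ b₂, H'.connectedComponentMk v = H'.connectedComponentMk x) ↔
      ((∃ v ∈ b₁ ∪ b₂, H.connectedComponentMk v = H.connectedComponentMk x) ∨
       (∃ v ∈ b₁ ∪ b₂, H.connectedComponentMk v = H.connectedComponentMk y)) :=
    (exists_congr fun v => and_congr_right fun _ => hmkx v).trans exists_or_mem
  have hP1 : ∀ u, ¬H.Reachable u x → ¬H.Reachable u y → ∀ (b : Set V),
      ((∃ v ∈ b, H'.connectedComponentMk v = H'.connectedComponentMk u) ↔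
        (∃ v ∈ b, H.connectedComponentMk v = H.connectedComponentMk u)) :=
    fun u hux huy b => exists_congr fun v => and_congr_right fun _ => hmk u hux huy v
  rw [count_lemma hre (fun C => ∃ v ∈ b₁, H.connectedComponentMk v = C)
      (fun C => ∃ v ∈ b₁, H'.connectedComponentMk v = C) (fun u hux huy => hP1 u hux huy b₁),
    count_lemma hre
      (fun C => (∃ v ∈ b₂, H.connectedComponentMk v = C) ∧
        ¬∃ v ∈ b₁, H.connectedComponentMk v = C)
      (fun C => (∃ v ∈ b₂, H'.connectedComponentMk v = C) ∧
        ¬∃ v ∈ b₁, H'.connectedComponentMk v = C)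
      (fun u hux huy => and_congr (hP1 u hux huy b₂) (not_congr (hP1 u hux huy b₁))),
    count_lemma hre
      (fun C => ¬∃ v ∈ b₁ ∪ b₂, H.connectedComponentMk v = C)
      (fun C => ¬∃ v ∈ b₁ ∪ b₂, H'.connectedComponentMk v = C)
      (fun u hux huy => not_congr (hP1 u hux huy (b₁ ∪ b₂)))]
  simp only [Nat.card_eq_fintype_card, Fintype.card_subtype]
  by_cases hr : H.Reachable x y
  · have hCeq : H.connectedComponentMk x = H.connectedComponentMk y :=
      SimpleGraph.ConnectedComponent.eq.mpr hr
    rw [if_pos hr, mul_one,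
      card_filter_split₁ (fun C => ∃ v ∈ b₁, H.connectedComponentMk v = C)
        (H.connectedComponentMk x),
      card_filter_split₁ (fun C => (∃ v ∈ b₂, H.connectedComponentMk v = C) ∧
        ¬∃ v ∈ b₁, H.connectedComponentMk v = C) (H.connectedComponentMk x),
      card_filter_split₁ (fun C => ¬∃ v ∈ b₁ ∪ b₂, H.connectedComponentMk v = C)
        (H.connectedComponentMk x),
      ← hCeq]
    simp only [c1, c2, c12, exists_union, not_or, ← hCeq]
    by_cases ha1 : (∃ v ∈ b₁, H.connectedComponentMk v = H.connectedComponentMk x) <;>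
    by_cases ha2 : (∃ v ∈ b₂, H.connectedComponentMk v = H.connectedComponentMk x) <;>
      simp only [ha1, ha2, Finset.pair_eq_singleton, true_or, or_true, false_or, or_false,
        and_true, true_and, and_false, false_and, not_true_eq_false, not_false_eq_true,
        if_true, if_false, ite_true, ite_false, or_self, and_self, add_zero,
        Finset.filter_congr_decidable] <;>
      ring
  · have hne : H.connectedComponentMk x ≠ H.connectedComponentMk y :=
      fun h => hr (SimpleGraph.ConnectedComponent.eq.mp h)
    rw [if_neg hr,
      card_filter_split (fun C => ∃ v ∈ b₁, H.connectedComponentMk v = C)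
        (H.connectedComponentMk x) (H.connectedComponentMk y) hne,
      card_filter_split (fun C => (∃ v ∈ b₂, H.connectedComponentMk v = C) ∧
        ¬∃ v ∈ b₁, H.connectedComponentMk v = C)
        (H.connectedComponentMk x) (H.connectedComponentMk y) hne,
      card_filter_split (fun C => ¬∃ v ∈ b₁ ∪ b₂, H.connectedComponentMk v = C)
        (H.connectedComponentMk x) (H.connectedComponentMk y) hne]
    simp only [c1, c2, c12, hconv b₁ x, hconv b₁ y, hconv b₂ x, hconv b₂ y,
      hconv (b₁ ∪ b₂) x, hconv (b₁ ∪ b₂) y, exists_union, not_or]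
    by_cases ha1 : (∃ v ∈ b₁, H.connectedComponentMk v = H.connectedComponentMk x) <;>
    by_cases ha2 : (∃ v ∈ b₂, H.connectedComponentMk v = H.connectedComponentMk x) <;>
    by_cases hb1 : (∃ v ∈ b₁, H.connectedComponentMk v = H.connectedComponentMk y) <;>
    by_cases hb2 : (∃ v ∈ b₂, H.connectedComponentMk v = H.connectedComponentMk y) <;>
      simp only [ha1, ha2, hb1, hb2, true_or, or_true, false_or, or_false,
        and_true, true_and, and_false, false_and, not_true_eq_false, not_false_eq_true,
        if_true, if_false, ite_true, ite_false, or_self, and_self, add_zero, pow_succ,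
        Finset.filter_congr_decidable] <;>
      ring

private lemma cluster_identity (G : SimpleGraph V) (q q₁ q₂ : ℝ) (b₁ b₂ : Set V)
    (η : Finset (Sym2 V)) (x y : V) (hxy : G.Adj x y) :
    q ^ kappaI G (insert s(x, y) η) b₁ b₂ * q₁ ^ kappaB G (insert s(x, y) η) b₁ *
        q₂ ^ kappaB2 G (insert s(x, y) η) b₁ b₂ * Qval G q q₁ q₂ b₁ b₂ η x y =
      q ^ kappaI G η b₁ b₂ * q₁ ^ kappaB G η b₁ * q₂ ^ kappaB2 G η b₁ b₂ := by
  have hre : ∀ u v, (openGraph G (insert s(x, y) η)).Reachable u v ↔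
      (openGraph G η).Reachable u v ∨
        ((openGraph G η).Reachable u x ∧ (openGraph G η).Reachable y v) ∨
        ((openGraph G η).Reachable u y ∧ (openGraph G η).Reachable x v) := by
    intro u v
    rw [openGraph_insert G η hxy]
    exact reach_sup_edge _ x y hxy.ne u v
  unfold kappaI kappaB kappaB2 Qval
  exact cluster_identity' hre q q₁ q₂ b₁ b₂

private lemma edge_card_insert (G : SimpleGraph V) [DecidableRel G.Adj]
    {x y : V} {η : Finset (Sym2 V)} (hxy : G.Adj x y) (hη : s(x, y) ∉ η) :
    ((insert s(x, y) η) ∩ G.edgeFinset).card = (η ∩ G.edgeFinset).card + 1 := by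
  rw [Finset.insert_inter_of_mem (SimpleGraph.mem_edgeFinset.mpr hxy)]
  exact Finset.card_insert_of_notMem fun h => hη (Finset.mem_inter.mp h).1

private lemma edge_card_sdiff (G : SimpleGraph V) [DecidableRel G.Adj]
    {x y : V} {η : Finset (Sym2 V)} (hxy : G.Adj x y) (hη : s(x, y) ∉ η) :
    (G.edgeFinset \ insert s(x, y) η).card + 1 = (G.edgeFinset \ η).card := by
  rw [Finset.sdiff_insert]
  exact Finset.card_erase_add_one
    (Finset.mem_sdiff.mpr ⟨SimpleGraph.mem_edgeFinset.mpr hxy, hη⟩)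

private lemma weight_eq (G : SimpleGraph V) [DecidableRel G.Adj]
    (p q q₁ q₂ : ℝ) (b₁ b₂ : Set V) {x y : V} {η : Finset (Sym2 V)}
    (hxy : G.Adj x y) (hη : s(x, y) ∉ η) :
    qFKweight G p q q₁ q₂ b₁ b₂ η * p =
      qFKweight G p q q₁ q₂ b₁ b₂ (insert s(x, y) η) *
        ((1 - p) * Qval G q q₁ q₂ b₁ b₂ η x y) := by
  have hc := cluster_identity G q q₁ q₂ b₁ b₂ η x y hxy
  unfold qFKweight
  rw [edge_card_insert G hxy hη, ← edge_card_sdiff G hxy hη, pow_succ, pow_succ]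
  linear_combination (-(p ^ (η ∩ G.edgeFinset).card * p *
    ((1 - p) ^ (G.edgeFinset \ insert s(x, y) η).card * (1 - p)))) * hc

private lemma Qval_ge_one {G : SimpleGraph V} {q q₁ q₂ : ℝ} {b₁ b₂ : Set V}
    {η : Finset (Sym2 V)} {x y : V} (hq₁ : 1 ≤ q₁) (hq₁₂ : q₁ ≤ q₂) (hq₂ : q₂ ≤ q) :
    1 ≤ Qval G q q₁ q₂ b₁ b₂ η x y := by
  unfold Qval; split_ifs <;> linarith

private lemma Qval_le_q {G : SimpleGraph V} {q q₁ q₂ : ℝ} {b₁ b₂ : Set V}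
    {η : Finset (Sym2 V)} {x y : V} (hq₁ : 1 ≤ q₁) (hq₁₂ : q₁ ≤ q₂) (hq₂ : q₂ ≤ q) :
    Qval G q q₁ q₂ b₁ b₂ η x y ≤ q := by
  unfold Qval; split_ifs <;> linarith

private lemma weight_pos (G : SimpleGraph V) [DecidableRel G.Adj]
    {p q q₁ q₂ : ℝ} (hp : 0 < p) (hp1 : p < 1)
    (hq₁ : 1 ≤ q₁) (hq₁₂ : q₁ ≤ q₂) (hq₂ : q₂ ≤ q) (b₁ b₂ : Set V) (ω : Finset (Sym2 V)) :
    0 < qFKweight G p q q₁ q₂ b₁ b₂ ω := by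
  unfold qFKweight
  have h1 : (0:ℝ) < 1 - p := by linarith
  have h2 : (0:ℝ) < q := by linarith
  have h3 : (0:ℝ) < q₁ := by linarith
  have h4 : (0:ℝ) < q₂ := by linarith
  positivity

private lemma Qval_antitone (G : SimpleGraph V) {q q₁ q₂ : ℝ}
    (hq₁ : 1 ≤ q₁) (hq₁₂ : q₁ ≤ q₂) (hq₂ : q₂ ≤ q) (b₁ b₂ : Set V)
    {η η' : Finset (Sym2 V)} (hsub : η ⊆ η') (x y : V) :
    Qval G q q₁ q₂ b₁ b₂ η' x y ≤ Qval G q q₁ q₂ b₁ b₂ η x y := by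
  have hle : openGraph G η ≤ openGraph G η' := by
    apply SimpleGraph.fromEdgeSet_mono
    exact Set.inter_subset_inter_left _ (Finset.coe_subset.mpr hsub)
  have hmono : ∀ u v : V, (openGraph G η).Reachable u v → (openGraph G η').Reachable u v :=
    fun u v h => h.mono hle
  have hmonoE : ∀ (b : Set V) (z : V), (∃ u ∈ b, (openGraph G η).Reachable z u) →
      (∃ u ∈ b, (openGraph G η').Reachable z u) :=
    fun b z ⟨u, hu, h⟩ => ⟨u, hu, hmono _ _ h⟩
  by_cases hr' : (openGraph G η').Reachable x y
  · have h : Qval G q q₁ q₂ b₁ b₂ η' x y = 1 := by unfold Qval; rw [if_pos hr']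
    rw [h]
    exact Qval_ge_one hq₁ hq₁₂ hq₂
  · have hr : ¬(openGraph G η).Reachable x y := fun h => hr' (hmono _ _ h)
    by_cases h1 : (∃ u ∈ b₁, (openGraph G η).Reachable x u) ∧
        (∃ u ∈ b₁, (openGraph G η).Reachable y u)
    · have h1' : (∃ u ∈ b₁, (openGraph G η').Reachable x u) ∧
          (∃ u ∈ b₁, (openGraph G η').Reachable y u) :=
        ⟨hmonoE b₁ x h1.1, hmonoE b₁ y h1.2⟩
      have e1 : Qval G q q₁ q₂ b₁ b₂ η x y = q₁ := by
        unfold Qval; rw [if_neg hr, if_pos h1]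
      have e2 : Qval G q q₁ q₂ b₁ b₂ η' x y = q₁ := by
        unfold Qval; rw [if_neg hr', if_pos h1']
      rw [e1, e2]
    · by_cases h2 : ((¬∃ u ∈ b₁, (openGraph G η).Reachable x u) ∧
            (∃ u ∈ b₂, (openGraph G η).Reachable x u) ∧
            (∃ u ∈ b₁ ∪ b₂, (openGraph G η).Reachable y u)) ∨
          ((¬∃ u ∈ b₁, (openGraph G η).Reachable y u) ∧
            (∃ u ∈ b₂, (openGraph G η).Reachable y u) ∧
            (∃ u ∈ b₁ ∪ b₂, (openGraph G η).Reachable x u))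
      · have e1 : Qval G q q₁ q₂ b₁ b₂ η x y = q₂ := by
          unfold Qval; rw [if_neg hr, if_neg h1, if_pos h2]
        rw [e1]
        by_cases h1' : (∃ u ∈ b₁, (openGraph G η').Reachable x u) ∧
            (∃ u ∈ b₁, (openGraph G η').Reachable y u)
        · have e2 : Qval G q q₁ q₂ b₁ b₂ η' x y = q₁ := by
            unfold Qval; rw [if_neg hr', if_pos h1']
          rw [e2]; exact hq₁₂
        · have h2' : ((¬∃ u ∈ b₁, (openGraph G η').Reachable x u) ∧
              (∃ u ∈ b₂, (openGraph G η').Reachable x u) ∧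
              (∃ u ∈ b₁ ∪ b₂, (openGraph G η').Reachable y u)) ∨
            ((¬∃ u ∈ b₁, (openGraph G η').Reachable y u) ∧
              (∃ u ∈ b₂, (openGraph G η').Reachable y u) ∧
              (∃ u ∈ b₁ ∪ b₂, (openGraph G η').Reachable x u)) := by
            rcases h2 with ⟨hxb1, hxb2, hy12⟩ | ⟨hyb1, hyb2, hx12⟩
            · by_cases hx1' : ∃ u ∈ b₁, (openGraph G η').Reachable x u
              · have hy1' : ¬∃ u ∈ b₁, (openGraph G η').Reachable y u :=
                  fun hy => h1' ⟨hx1', hy⟩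
                refine Or.inr ⟨hy1', ?_, ?_⟩
                · obtain ⟨u, hu, h⟩ := hmonoE _ y hy12
                  rcases hu with hu | hu
                  · exact absurd ⟨u, hu, h⟩ hy1'
                  · exact ⟨u, hu, h⟩
                · obtain ⟨u, hu, h⟩ := hx1'
                  exact ⟨u, Or.inl hu, h⟩
              · exact Or.inl ⟨hx1', hmonoE _ x hxb2, hmonoE _ y hy12⟩
            · by_cases hy1' : ∃ u ∈ b₁, (openGraph G η').Reachable y u
              · have hx1' : ¬∃ u ∈ b₁, (openGraph G η').Reachable x u :=
                  fun hx => h1' ⟨hx, hy1'⟩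
                refine Or.inl ⟨hx1', ?_, ?_⟩
                · obtain ⟨u, hu, h⟩ := hmonoE _ x hx12
                  rcases hu with hu | hu
                  · exact absurd ⟨u, hu, h⟩ hx1'
                  · exact ⟨u, hu, h⟩
                · obtain ⟨u, hu, h⟩ := hy1'
                  exact ⟨u, Or.inl hu, h⟩
              · exact Or.inr ⟨hy1', hmonoE _ y hyb2, hmonoE _ x hx12⟩
          have e2 : Qval G q q₁ q₂ b₁ b₂ η' x y = q₂ := by
            unfold Qval; rw [if_neg hr', if_neg h1', if_pos h2']
          rw [e2]
      · have e1 : Qval G q q₁ q₂ b₁ b₂ η x y = q := by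
          unfold Qval; rw [if_neg hr, if_neg h1, if_neg h2]
        rw [e1]
        exact Qval_le_q hq₁ hq₁₂ hq₂

/-- Single-edge conditional probabilities of the quasi-FK measure: for an edge
`e = xy` and a configuration `η` off `e`, the conditional probability that `e`
is open equals `p / (p + (1−p) Q)` with `Q` as in `Qval`; in particular it is
nondecreasing in `η` when `1 ≤ q₁ ≤ q₂ ≤ q`. -/
theorem qFK_conditional_single_edge (G : SimpleGraph V) [DecidableRel G.Adj]
    (p q q₁ q₂ : ℝ) (hp : 0 < p) (hp1 : p < 1)
    (hq₁ : 1 ≤ q₁) (hq₁₂ : q₁ ≤ q₂) (hq₂ : q₂ ≤ q)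
    (b₁ b₂ : Set V) (hdisj : Disjoint b₁ b₂)
    (x y : V) (hxy : G.Adj x y) :
    (∀ η : Finset (Sym2 V), s(x, y) ∉ η →
      condOpenProb G p q q₁ q₂ b₁ b₂ η x y
        = p / (p + (1 - p) * Qval G q q₁ q₂ b₁ b₂ η x y)) ∧
    (∀ η η' : Finset (Sym2 V), s(x, y) ∉ η → s(x, y) ∉ η' → η ⊆ η' →
      condOpenProb G p q q₁ q₂ b₁ b₂ η x y ≤ condOpenProb G p q q₁ q₂ b₁ b₂ η' x y) := by
  have key : ∀ η : Finset (Sym2 V), s(x, y) ∉ η →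
      condOpenProb G p q q₁ q₂ b₁ b₂ η x y
        = p / (p + (1 - p) * Qval G q q₁ q₂ b₁ b₂ η x y) := by
    intro η hη
    have hW' := weight_pos G hp hp1 hq₁ hq₁₂ hq₂ b₁ b₂ (insert s(x, y) η)
    have hW := weight_pos G hp hp1 hq₁ hq₁₂ hq₂ b₁ b₂ η
    have hwe := weight_eq G p q q₁ q₂ b₁ b₂ hxy hη
    have hQ1 : 1 ≤ Qval G q q₁ q₂ b₁ b₂ η x y := Qval_ge_one hq₁ hq₁₂ hq₂
    have hden : 0 < p + (1 - p) * Qval G q q₁ q₂ b₁ b₂ η x y := by nlinarith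
    unfold condOpenProb
    rw [div_eq_div_iff (by positivity : (0:ℝ) < _).ne' hden.ne']
    linear_combination -hwe
  constructor
  · exact key
  · intro η η' hη hη' hsub
    rw [key η hη, key η' hη']
    have hQ1' : 1 ≤ Qval G q q₁ q₂ b₁ b₂ η' x y := Qval_ge_one hq₁ hq₁₂ hq₂
    have hden' : 0 < p + (1 - p) * Qval G q q₁ q₂ b₁ b₂ η' x y := by nlinarith
    have hle := Qval_antitone G hq₁ hq₁₂ hq₂ b₁ b₂ hsub x y
    have : p + (1 - p) * Qval G q q₁ q₂ b₁ b₂ η' x y ≤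
        p + (1 - p) * Qval G q q₁ q₂ b₁ b₂ η x y := by nlinarith
    exact div_le_div_of_nonneg_left hp.le hden' this
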